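/- Let n ≥ 2 and let M, N : I^n → I be n-variable means (i.e., min(x_1,…,x_n) ≤ M(x_1,…,x_n) ≤ max(x_1,…,x_n) for all x_1,…,x_n ∈ I, and similarly for N) that are twice continuously differentiable at every point of the diagonal of I^n. If (∂_i M)^Δ = (∂_i N)^Δ on I for every i ∈ {1,…,n} and, at every point of I, the symmetric (n−1)×(n−1)-matrix with (i,j)-entry (∂_i∂_j N)^Δ − (∂_i∂_j M)^Δ, for i, j ∈ {1,…,n−1}, is positive definite, then M is locally smaller than N. -/

import Mathlib

open Set Function Real

/-- The `n`-variable generalized Bajraktarević mean `A_{f,p}` on the interval `I`: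
`A_{f,p}(x) = f⁻¹((∑ pᵢ(xᵢ) f(xᵢ)) / (∑ pᵢ(xᵢ)))`. -/
noncomputable def bajMean {n : ℕ} (I : Set ℝ) (f : ℝ → ℝ) (p : Fin n → ℝ → ℝ)
    (x : Fin n → ℝ) : ℝ :=
  Function.invFunOn f I ((∑ i, p i (x i) * f (x i)) / (∑ i, p i (x i)))

/-- The `i`-th first-order partial derivative of `Φ : Iⁿ → ℝ`. -/
noncomputable def pder {n : ℕ} (Φ : (Fin n → ℝ) → ℝ) (i : Fin n) (y : Fin n → ℝ) : ℝ :=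
  deriv (fun t => Φ (Function.update y i t)) (y i)

/-- The second-order partial derivative `∂ᵢ∂ⱼΦ`. -/
noncomputable def pder2 {n : ℕ} (Φ : (Fin n → ℝ) → ℝ) (i j : Fin n) :
    (Fin n → ℝ) → ℝ :=
  pder (pder Φ j) i

/-- `M` is locally smaller than `N`: there is an open set `U ⊆ Iⁿ` containing the
diagonal of `Iⁿ` on which `M ≤ N`. -/
def LocallySmaller {n : ℕ} (I : Set ℝ) (M N : (Fin n → ℝ) → ℝ) : Prop :=
  ∃ U : Set (Fin n → ℝ), IsOpen U ∧ U ⊆ {x | ∀ i, x i ∈ I} ∧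
    (∀ x ∈ I, (fun _ => x) ∈ U) ∧ ∀ x ∈ U, M x ≤ N x

lemma pder_eq_fderiv {n : ℕ} {Φ : (Fin n → ℝ) → ℝ} {y : Fin n → ℝ}
    (h : DifferentiableAt ℝ Φ y) (i : Fin n) :
    pder Φ i y = fderiv ℝ Φ y (Pi.single i 1) := by
  have hF : HasFDerivAt Φ (fderiv ℝ Φ y) (Function.update y i (y i)) := by
    rw [Function.update_eq_self]; exact h.hasFDerivAt
  exact (hF.comp_hasDerivAt (y i) (hasDerivAt_update y i (y i))).deriv

lemma clm_apply_eq_sum {n : ℕ} (L : (Fin n → ℝ) →L[ℝ] ℝ) (v : Fin n → ℝ) :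
    L v = ∑ i, v i * L (Pi.single i 1) := by
  have hv : v = ∑ i, v i • (Pi.single i 1 : Fin n → ℝ) := by
    ext j
    simp [Finset.sum_apply, Pi.single_apply]
  conv_lhs => rw [hv]
  rw [map_sum]
  simp [smul_eq_mul]

lemma clm2_apply_eq_sum {n : ℕ} (H : (Fin n → ℝ) →L[ℝ] (Fin n → ℝ) →L[ℝ] ℝ)
    (u v : Fin n → ℝ) :
    H u v = ∑ i, ∑ j, u i * v j * H (Pi.single i 1) (Pi.single j 1) := by
  rw [clm_apply_eq_sum (H u) v]
  have : ∀ j, H u (Pi.single j 1) = ∑ i, u i * H (Pi.single i 1) (Pi.single j 1) := by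
    intro j
    have h0 : (H u) (Pi.single j 1) = (H.flip (Pi.single j 1)) u := rfl
    rw [h0, clm_apply_eq_sum (H.flip (Pi.single j 1)) u]
    simp [ContinuousLinearMap.flip_apply]
  rw [Finset.sum_comm]
  refine Finset.sum_congr rfl fun j _ => ?_
  rw [this j, Finset.mul_sum]
  refine Finset.sum_congr rfl fun i _ => by ring

lemma eventually_diff {k : ℕ} {Φ : (Fin k → ℝ) → ℝ} {y : Fin k → ℝ}
    (h : ContDiffAt ℝ 2 Φ y) :
    ∀ᶠ z in nhds y, DifferentiableAt ℝ Φ z ∧ DifferentiableAt ℝ (fderiv ℝ Φ) z := by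
  obtain ⟨u, hu, h2⟩ := h.contDiffOn (le_refl 2) (by simp)
  obtain ⟨t, htu, hto, hyt⟩ := mem_nhds_iff.mp hu
  have h2t := h2.mono htu
  filter_upwards [hto.mem_nhds hyt] with z hz
  refine ⟨(h2t.differentiableOn (by norm_num)).differentiableAt (hto.mem_nhds hz), ?_⟩
  exact ((h2t.fderiv_of_isOpen (m := 1) hto (by norm_num)).differentiableOn
    one_ne_zero).differentiableAt (hto.mem_nhds hz)

lemma pder2_eq_fderiv2 {k : ℕ} {Φ : (Fin k → ℝ) → ℝ} {y : Fin k → ℝ}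
    (h : ContDiffAt ℝ 2 Φ y) (i j : Fin k) :
    pder2 Φ i j y = fderiv ℝ (fderiv ℝ Φ) y (Pi.single i 1) (Pi.single j 1) := by
  have hev := eventually_diff h
  have hψ : ContinuousAt (fun t : ℝ => Function.update y i t) (y i) :=
    (hasDerivAt_update y i (y i)).continuousAt
  have hψx : Function.update y i (y i) = y := Function.update_eq_self i y
  have hev' : ∀ᶠ t in nhds (y i),
      DifferentiableAt ℝ Φ (Function.update y i t) := by
    have := hψ.tendsto
    rw [hψx] at this
    filter_upwards [this.eventually hev] with t ht using ht.1
  have heq : (fun t => pder Φ j (Function.update y i t))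
      =ᶠ[nhds (y i)] fun t => fderiv ℝ Φ (Function.update y i t) (Pi.single j 1) := by
    filter_upwards [hev'] with t ht using pder_eq_fderiv ht j
  have hd2 : DifferentiableAt ℝ (fderiv ℝ Φ) y :=
    ((h.fderiv_right (m := 1) (by norm_num)).differentiableAt one_ne_zero)
  have hF : HasFDerivAt (fderiv ℝ Φ) (fderiv ℝ (fderiv ℝ Φ) y)
      (Function.update y i (y i)) := by
    rw [hψx]; exact hd2.hasFDerivAt
  have hc := hF.comp_hasDerivAt (y i) (hasDerivAt_update y i (y i))
  have hA := (ContinuousLinearMap.apply ℝ ℝ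
      (Pi.single j 1 : Fin k → ℝ)).hasFDerivAt.comp_hasDerivAt (y i) hc
  have hkey : deriv (fun t => fderiv ℝ Φ (Function.update y i t) (Pi.single j 1)) (y i)
      = fderiv ℝ (fderiv ℝ Φ) y (Pi.single i 1) (Pi.single j 1) := by
    have := hA.deriv
    exact this
  rw [pder2, pder, heq.deriv_eq]
  exact hkey

set_option maxHeartbeats 2000000

/-- Theorem PZ17, sufficiency part: if the means `M, N` on `Iⁿ` are twice continuously
differentiable at every diagonal point, `(∂ᵢM)^Δ = (∂ᵢN)^Δ` for all `i`, and the
`(n-1)×(n-1)` matrix `((∂ᵢ∂ⱼN)^Δ - (∂ᵢ∂ⱼM)^Δ)_{i,j=1}^{n-1}` is positive definite at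
every point of `I`, then `M` is locally smaller than `N`. -/
theorem stmt4 {n : ℕ} (hn : 2 ≤ n) (I : Set ℝ) (hIopen : IsOpen I)
    (hIconn : I.OrdConnected) (hIne : I.Nonempty)
    (M N : (Fin n → ℝ) → ℝ)
    (hM : ∀ x : Fin n → ℝ, (∀ i, x i ∈ I) → (⨅ i, x i) ≤ M x ∧ M x ≤ ⨆ i, x i)
    (hN : ∀ x : Fin n → ℝ, (∀ i, x i ∈ I) → (⨅ i, x i) ≤ N x ∧ N x ≤ ⨆ i, x i)
    (hMC2 : ∀ x ∈ I, ContDiffAt ℝ 2 M (fun _ => x))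
    (hNC2 : ∀ x ∈ I, ContDiffAt ℝ 2 N (fun _ => x))
    (hder1 : ∀ x ∈ I, ∀ i : Fin n, pder M i (fun _ => x) = pder N i (fun _ => x))
    (hposdef : ∀ x ∈ I, ∀ v : Fin (n - 1) → ℝ, v ≠ 0 →
      0 < ∑ i : Fin (n - 1), ∑ j : Fin (n - 1), v i * v j *
          (pder2 N (Fin.castLE (Nat.sub_le n 1) i) (Fin.castLE (Nat.sub_le n 1) j)
              (fun _ => x) -
            pder2 M (Fin.castLE (Nat.sub_le n 1) i) (Fin.castLE (Nat.sub_le n 1) j)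
              (fun _ => x))) :
    LocallySmaller I M N := by
  classical
  obtain ⟨m, rfl⟩ : ∃ m, n = m + 1 := ⟨n - 1, by omega⟩
  have hm : 1 ≤ m := by omega
  set D : (Fin (m + 1) → ℝ) → ℝ := fun y => N y - M y with hDdef
  have hD2 : ∀ x ∈ I, ContDiffAt ℝ 2 D (fun _ => x) :=
    fun x hx => (hNC2 x hx).sub (hMC2 x hx)
  -- D vanishes on the diagonal
  have hdiag : ∀ x ∈ I, D (fun _ => x) = 0 := by
    intro x hx
    have h1 := hM (fun _ => x) (fun _ => hx)
    have h2 := hN (fun _ => x) (fun _ => hx)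
    have e1 : (⨅ _ : Fin (m + 1), x) = x := ciInf_const
    have e2 : (⨆ _ : Fin (m + 1), x) = x := ciSup_const
    rw [e1, e2] at h1 h2
    have hMx : M (fun _ => x) = x := le_antisymm h1.2 h1.1
    have hNx : N (fun _ => x) = x := le_antisymm h2.2 h2.1
    simp [hDdef, hMx, hNx]
  -- the gradient of D vanishes on the diagonal
  have hgrad : ∀ x ∈ I, fderiv ℝ D (fun _ => x) = 0 := by
    intro x hx
    have hMd : DifferentiableAt ℝ M (fun _ => x) :=
      (hMC2 x hx).differentiableAt (by norm_num)
    have hNd : DifferentiableAt ℝ N (fun _ => x) :=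
      (hNC2 x hx).differentiableAt (by norm_num)
    have hsub : fderiv ℝ D (fun _ => x)
        = fderiv ℝ N (fun _ => x) - fderiv ℝ M (fun _ => x) := fderiv_sub hNd hMd
    ext v
    rw [hsub]
    simp only [ContinuousLinearMap.sub_apply, ContinuousLinearMap.zero_apply]
    rw [clm_apply_eq_sum (fderiv ℝ N (fun _ => x)) v,
      clm_apply_eq_sum (fderiv ℝ M (fun _ => x)) v, sub_eq_zero]
    refine Finset.sum_congr rfl fun i _ => ?_
    rw [← pder_eq_fderiv hNd i, ← pder_eq_fderiv hMd i, hder1 x hx i]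
  -- the Hessian of D annihilates the all-ones vector
  have hone : ∀ x ∈ I,
      fderiv ℝ (fderiv ℝ D) (fun _ => x) (fun _ => (1 : ℝ)) = 0 := by
    intro x hx
    have hd2 : DifferentiableAt ℝ (fderiv ℝ D) (fun _ => x) :=
      ((hD2 x hx).fderiv_right (m := 1) (by norm_num)).differentiableAt one_ne_zero
    have hin : HasDerivAt (fun t : ℝ => (fun _ => t : Fin (m + 1) → ℝ))
        (fun _ => (1 : ℝ)) x := by
      have he : (fun t : ℝ => (fun _ => t : Fin (m + 1) → ℝ))
          = fun t => t • (fun _ => (1 : ℝ) : Fin (m + 1) → ℝ) := by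
        funext t; ext j; simp
      rw [he]
      simpa using (hasDerivAt_id x).smul_const (fun _ => (1 : ℝ) : Fin (m + 1) → ℝ)
    have hcomp := hd2.hasFDerivAt.comp_hasDerivAt x hin
    have hzero : HasDerivAt
        (fderiv ℝ D ∘ fun t : ℝ => (fun _ => t : Fin (m + 1) → ℝ)) 0 x := by
      refine (hasDerivAt_const x (0 : (Fin (m + 1) → ℝ) →L[ℝ] ℝ)).congr_of_eventuallyEq ?_
      filter_upwards [hIopen.mem_nhds hx] with t ht using hgrad t ht
    exact (hcomp.unique hzero)
  have hsymm : ∀ x ∈ I, ∀ v w : Fin (m + 1) → ℝ,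
      fderiv ℝ (fderiv ℝ D) (fun _ => x) v w
        = fderiv ℝ (fderiv ℝ D) (fun _ => x) w v :=
    fun x hx => (hD2 x hx).isSymmSndFDerivAt (by simp)
  -- Hessian entries of D versus pder2 of N and M
  have hHsub : ∀ x ∈ I, ∀ i j : Fin (m + 1),
      fderiv ℝ (fderiv ℝ D) (fun _ => x) (Pi.single i 1) (Pi.single j 1)
        = pder2 N i j (fun _ => x) - pder2 M i j (fun _ => x) := by
    intro x hx i j
    have heq : fderiv ℝ D =ᶠ[nhds (fun _ => x : Fin (m + 1) → ℝ)]
        fun y => fderiv ℝ N y - fderiv ℝ M y := by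
      filter_upwards [eventually_diff (hNC2 x hx), eventually_diff (hMC2 x hx)]
        with z hz1 hz2
      exact fderiv_sub hz1.1 hz2.1
    have hNd2 : DifferentiableAt ℝ (fderiv ℝ N) (fun _ => x) :=
      ((hNC2 x hx).fderiv_right (m := 1) (by norm_num)).differentiableAt one_ne_zero
    have hMd2 : DifferentiableAt ℝ (fderiv ℝ M) (fun _ => x) :=
      ((hMC2 x hx).fderiv_right (m := 1) (by norm_num)).differentiableAt one_ne_zero
    rw [heq.fderiv_eq, fderiv_fun_sub hNd2 hMd2]
    simp only [ContinuousLinearMap.sub_apply]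
    rw [pder2_eq_fderiv2 (hNC2 x hx) i j, pder2_eq_fderiv2 (hMC2 x hx) i j]
  -- positive definiteness of the Hessian of D on the hyperplane of sum-zero vectors
  have hQpos : ∀ x ∈ I, ∀ w : Fin (m + 1) → ℝ, (∑ i, w i) = 0 → w ≠ 0 →
      0 < fderiv ℝ (fderiv ℝ D) (fun _ => x) w w := by
    intro x hx w hsum hw
    set H := fderiv ℝ (fderiv ℝ D) (fun _ => x : Fin (m + 1) → ℝ) with hH
    set a := w (Fin.last m) with ha
    set u : Fin (m + 1) → ℝ := w - a • (fun _ => (1 : ℝ)) with hu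
    have hulast : u (Fin.last m) = 0 := by simp [hu, ha]
    set v : Fin m → ℝ := fun i => u i.castSucc with hv
    have honeL : H (fun _ => (1 : ℝ)) = 0 := hone x hx
    have honeR : ∀ z, H z (fun _ => (1 : ℝ)) = 0 := by
      intro z; rw [hsymm x hx]; rw [honeL]; rfl
    have hvne : v ≠ 0 := by
      intro h0
      apply hw
      have hu0 : u = 0 := by
        funext j
        induction j using Fin.lastCases with
        | last => exact hulast
        | cast i => exact congrFun h0 i
      have hwa : w = a • (fun _ => (1 : ℝ)) := by rwa [hu, sub_eq_zero] at hu0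
      have hsum' : ((m : ℝ) + 1) * a = 0 := by
        rw [hwa] at hsum
        simpa [Finset.sum_const, mul_comm] using hsum
      have ha0 : a = 0 := by
        have hne : ((m : ℝ) + 1) ≠ 0 := by positivity
        exact (mul_eq_zero.1 hsum').resolve_left hne
      rw [hwa, ha0, zero_smul]
    have hw_eq : w = u + a • (fun _ => (1 : ℝ)) := by rw [hu]; abel
    have key : H w w = H u u := by
      conv_lhs => rw [hw_eq]
      simp [map_add, map_smul, honeL, honeR, ContinuousLinearMap.add_apply,
        ContinuousLinearMap.smul_apply]
    rw [key, clm2_apply_eq_sum H u u]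
    have hsum_outer : ∑ i : Fin (m + 1), ∑ j : Fin (m + 1),
        u i * u j * H (Pi.single i 1) (Pi.single j 1)
        = ∑ i : Fin m, ∑ j : Fin m, u i.castSucc * u j.castSucc *
            H (Pi.single i.castSucc 1) (Pi.single j.castSucc 1) := by
      rw [Fin.sum_univ_castSucc]
      have hlast0 : ∑ j : Fin (m + 1),
          u (Fin.last m) * u j * H (Pi.single (Fin.last m) 1) (Pi.single j 1) = 0 := by
        simp [hulast]
      rw [hlast0, add_zero]
      refine Finset.sum_congr rfl fun i _ => ?_
      rw [Fin.sum_univ_castSucc]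
      simp [hulast]
    rw [hsum_outer]
    have hpos : 0 < ∑ i : Fin m, ∑ j : Fin m, v i * v j *
        (pder2 N i.castSucc j.castSucc (fun _ => x)
          - pder2 M i.castSucc j.castSucc (fun _ => x)) := hposdef x hx v hvne
    refine lt_of_lt_of_eq hpos ?_
    refine Finset.sum_congr rfl fun i _ => Finset.sum_congr rfl fun j _ => ?_
    rw [← hHsub x hx i.castSucc j.castSucc]
  -- minimum on the sphere
  have hmin : ∀ x ∈ I, ∃ κ > 0, ∀ w : Fin (m + 1) → ℝ, (∑ i, w i) = 0 →
      κ * ‖w‖ ^ 2 ≤ fderiv ℝ (fderiv ℝ D) (fun _ => x) w w := by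
    intro x hx
    set H := fderiv ℝ (fderiv ℝ D) (fun _ => x : Fin (m + 1) → ℝ) with hH
    set S : Set (Fin (m + 1) → ℝ) := {w | (∑ i, w i) = 0 ∧ ‖w‖ = 1} with hS
    have hsumc : Continuous fun w : Fin (m + 1) → ℝ => ∑ i, w i :=
      continuous_finset_sum _ fun i _ => continuous_apply i
    have hSclosed : IsClosed S := by
      have : S = {w : Fin (m + 1) → ℝ | (∑ i, w i) = 0} ∩ {w | ‖w‖ = 1} := rfl
      rw [this]
      exact (isClosed_eq hsumc continuous_const).inter
        (isClosed_eq continuous_norm continuous_const)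
    have hSbdd : Bornology.IsBounded S := by
      refine Bornology.IsBounded.subset (Metric.isBounded_closedBall
        (x := (0 : Fin (m + 1) → ℝ)) (r := 1)) ?_
      intro w hw
      simp [Metric.mem_closedBall, dist_zero_right, hw.2]
    have hScomp : IsCompact S := Metric.isCompact_of_isClosed_isBounded hSclosed hSbdd
    have hSne : S.Nonempty := by
      set i0 : Fin (m + 1) := ⟨0, by omega⟩ with hi0
      set i1 : Fin (m + 1) := ⟨1, by omega⟩ with hi1
      have h01 : i0 ≠ i1 := by simp [hi0, hi1, Fin.ext_iff]
      set w₀ : Fin (m + 1) → ℝ := Pi.single i0 1 - Pi.single i1 1 with hw₀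
      have hw₀sum : (∑ i, w₀ i) = 0 := by
        simp [hw₀, Finset.sum_sub_distrib, Pi.single_apply]
      have hw₀ne : w₀ ≠ 0 := by
        intro h
        have h2 := congrFun h i0
        rw [hw₀] at h2
        simp only [Pi.sub_apply, Pi.single_eq_same, Pi.single_eq_of_ne h01,
          Pi.zero_apply] at h2
        norm_num at h2
      have hnw₀ : ‖w₀‖ ≠ 0 := norm_ne_zero_iff.2 hw₀ne
      refine ⟨‖w₀‖⁻¹ • w₀, ?_, ?_⟩
      · show (∑ i, (‖w₀‖⁻¹ • w₀) i) = 0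
        simp only [Pi.smul_apply, smul_eq_mul, ← Finset.mul_sum, hw₀sum, mul_zero]
      · show ‖‖w₀‖⁻¹ • w₀‖ = 1
        rw [norm_smul, norm_inv, norm_norm, inv_mul_cancel₀ hnw₀]
    have hQcont : ContinuousOn (fun w => H w w) S := by
      have hcc : Continuous fun w : Fin (m + 1) → ℝ => H w w :=
        H.continuous₂.comp (continuous_id.prodMk continuous_id)
      exact hcc.continuousOn
    obtain ⟨w₁, hw₁S, hw₁min⟩ := hScomp.exists_isMinOn hSne hQcont
    have hw₁ne : w₁ ≠ 0 := by
      intro h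
      have := hw₁S.2
      rw [h] at this
      simp at this
    have hκ : 0 < H w₁ w₁ := hQpos x hx w₁ hw₁S.1 hw₁ne
    refine ⟨H w₁ w₁, hκ, ?_⟩
    intro w hwsum
    rcases eq_or_ne w 0 with rfl | hw0
    · simp
    · have hnw : ‖w‖ ≠ 0 := norm_ne_zero_iff.2 hw0
      set w' : Fin (m + 1) → ℝ := ‖w‖⁻¹ • w with hw'
      have hw'S : w' ∈ S := by
        constructor
        · show (∑ i, (‖w‖⁻¹ • w) i) = 0
          simp only [Pi.smul_apply, smul_eq_mul, ← Finset.mul_sum, hwsum, mul_zero]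
        · show ‖‖w‖⁻¹ • w‖ = 1
          rw [norm_smul, norm_inv, norm_norm, inv_mul_cancel₀ hnw]
      have hmin' : H w₁ w₁ ≤ H w' w' := hw₁min hw'S
      have hexp : H w w = ‖w‖ ^ 2 * H w' w' := by
        have hww : w = ‖w‖ • w' := by
          rw [hw', smul_smul, mul_inv_cancel₀ hnw, one_smul]
        conv_lhs => rw [hww]
        simp only [map_smul, ContinuousLinearMap.smul_apply, smul_eq_mul]
        ring
      rw [hexp]
      have h2 : (0 : ℝ) ≤ ‖w‖ ^ 2 := sq_nonneg _
      nlinarith [hmin']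
  -- the key local estimate
  have hkey : ∀ x₀ ∈ I, ∃ r > 0,
      (Metric.ball (fun _ => x₀ : Fin (m + 1) → ℝ) r ⊆ {y | ∀ i, y i ∈ I}) ∧
      ∀ y ∈ Metric.ball (fun _ => x₀ : Fin (m + 1) → ℝ) r, M y ≤ N y := by
    intro x₀ hx₀
    obtain ⟨κ, hκ, hκle⟩ := hmin x₀ hx₀
    have hm1 : ((m : ℝ) + 1) ≠ 0 := by positivity
    have hcont : ContinuousAt (fderiv ℝ (fderiv ℝ D)) (fun _ => x₀ : Fin (m + 1) → ℝ) := by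
      have h1 : ContDiffAt ℝ 1 (fderiv ℝ D) (fun _ => x₀ : Fin (m + 1) → ℝ) :=
        (hD2 x₀ hx₀).fderiv_right (by norm_num)
      have h0 : ContDiffAt ℝ 0 (fderiv ℝ (fderiv ℝ D)) (fun _ => x₀ : Fin (m + 1) → ℝ) :=
        h1.fderiv_right (by norm_num)
      exact h0.continuousAt
    obtain ⟨δ₁, hδ₁pos, hδ₁⟩ := (Metric.continuousAt_iff (f := fderiv ℝ (fderiv ℝ D))
      (a := (fun _ => x₀ : Fin (m + 1) → ℝ))).mp hcont (κ / 2) (by positivity)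
    obtain ⟨u, hu, hu2⟩ := (hD2 x₀ hx₀).contDiffOn (le_refl 2) (by simp)
    obtain ⟨t, htu, hto, hxt⟩ := mem_nhds_iff.mp hu
    have ht2 := hu2.mono htu
    have hDdiff : ∀ z ∈ t, DifferentiableAt ℝ D z :=
      fun z hz => (ht2.differentiableOn (by norm_num)).differentiableAt (hto.mem_nhds hz)
    have hD'diff : ∀ z ∈ t, DifferentiableAt ℝ (fderiv ℝ D) z :=
      fun z hz => ((ht2.fderiv_of_isOpen (m := 1) hto (by norm_num)).differentiableOn
        one_ne_zero).differentiableAt (hto.mem_nhds hz)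
    obtain ⟨δ₃, hδ₃pos, hδ₃⟩ := Metric.isOpen_iff.mp hto _ hxt
    obtain ⟨δ₂, hδ₂pos, hδ₂⟩ := Metric.isOpen_iff.mp hIopen x₀ hx₀
    set r := min (min δ₁ δ₃ / 3) δ₂ with hrdef
    have hrpos : 0 < r :=
      lt_min (div_pos (lt_min hδ₁pos hδ₃pos) (by norm_num)) hδ₂pos
    have h3r : 3 * r ≤ min δ₁ δ₃ := by
      have := min_le_left (min δ₁ δ₃ / 3) δ₂
      linarith
    refine ⟨r, hrpos, ?_, ?_⟩
    · intro y hy i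
      apply hδ₂
      have h1 : |y i - x₀| ≤ ‖y - (fun _ => x₀ : Fin (m + 1) → ℝ)‖ := by
        exact norm_le_pi_norm (y - fun _ => x₀) i
      have h2 : ‖y - (fun _ => x₀ : Fin (m + 1) → ℝ)‖ < r := by
        rw [← dist_eq_norm]; exact Metric.mem_ball.mp hy
      rw [Metric.mem_ball, Real.dist_eq]
      exact lt_of_le_of_lt h1 (lt_of_lt_of_le h2 (min_le_right _ _))
    · intro y hy
      set s := (∑ i, y i) / ((m : ℝ) + 1) with hs
      set w : Fin (m + 1) → ℝ := y - (fun _ => s) with hw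
      have hyx : ‖y - (fun _ => x₀ : Fin (m + 1) → ℝ)‖ < r := by
        rw [← dist_eq_norm]; exact Metric.mem_ball.mp hy
      have hcoord : ∀ i, |y i - x₀| ≤ ‖y - (fun _ => x₀ : Fin (m + 1) → ℝ)‖ := fun i => by
        exact norm_le_pi_norm (y - fun _ => x₀) i
      have hsx : |s - x₀| ≤ ‖y - (fun _ => x₀ : Fin (m + 1) → ℝ)‖ := by
        have h1 : s - x₀ = (∑ i, (y i - x₀)) / ((m : ℝ) + 1) := by
          rw [Finset.sum_sub_distrib, Finset.sum_const, Finset.card_univ, Fintype.card_fin,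
            nsmul_eq_mul, hs]
          push_cast
          field_simp
        rw [h1, abs_div, abs_of_pos (show (0 : ℝ) < (m : ℝ) + 1 by positivity),
          div_le_iff₀ (show (0 : ℝ) < (m : ℝ) + 1 by positivity)]
        calc |∑ i, (y i - x₀)| ≤ ∑ i, |y i - x₀| := Finset.abs_sum_le_sum_abs _ _
          _ ≤ ∑ _i : Fin (m + 1), ‖y - (fun _ => x₀ : Fin (m + 1) → ℝ)‖ :=
              Finset.sum_le_sum fun i _ => hcoord i
          _ = ‖y - (fun _ => x₀ : Fin (m + 1) → ℝ)‖ * ((m : ℝ) + 1) := by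
              rw [Finset.sum_const, Finset.card_univ, Fintype.card_fin, nsmul_eq_mul]
              push_cast; ring
      have hsI : s ∈ I := by
        apply hδ₂
        rw [Metric.mem_ball, Real.dist_eq]
        exact lt_of_le_of_lt hsx (lt_of_lt_of_le hyx (min_le_right _ _))
      have hwsum : (∑ i, w i) = 0 := by
        rw [hw]
        simp only [Pi.sub_apply]
        rw [Finset.sum_sub_distrib, Finset.sum_const, Finset.card_univ, Fintype.card_fin,
          nsmul_eq_mul, hs]
        push_cast
        field_simp
        ring
      have hcs : ‖((fun _ => s) - (fun _ => x₀) : Fin (m + 1) → ℝ)‖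
          ≤ ‖y - (fun _ => x₀ : Fin (m + 1) → ℝ)‖ := by
        have he : (((fun _ => s) - (fun _ => x₀)) : Fin (m + 1) → ℝ)
            = fun _ => s - x₀ := rfl
        rw [he, pi_norm_const (s - x₀), Real.norm_eq_abs]
        exact hsx
      have hwnorm : ‖w‖ ≤ 2 * ‖y - (fun _ => x₀ : Fin (m + 1) → ℝ)‖ := by
        have he : w = (y - fun _ => x₀) + (((fun _ => x₀) - fun _ => s) : Fin (m + 1) → ℝ) := by
          rw [hw]; abel
        rw [he]
        calc ‖(y - fun _ => x₀) + (((fun _ => x₀) - fun _ => s) : Fin (m + 1) → ℝ)‖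
            ≤ ‖y - (fun _ => x₀ : Fin (m + 1) → ℝ)‖
              + ‖(((fun _ => x₀) - fun _ => s) : Fin (m + 1) → ℝ)‖ := norm_add_le _ _
          _ ≤ ‖y - (fun _ => x₀ : Fin (m + 1) → ℝ)‖ + ‖y - (fun _ => x₀ : Fin (m + 1) → ℝ)‖ := by
              rw [norm_sub_rev ((fun _ => x₀) : Fin (m + 1) → ℝ) (fun _ => s)]
              exact add_le_add le_rfl hcs
          _ = 2 * ‖y - (fun _ => x₀ : Fin (m + 1) → ℝ)‖ := by ring
      have hzball : ∀ τ ∈ Icc (0 : ℝ) 1,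
          ((fun _ => s) + τ • w : Fin (m + 1) → ℝ)
            ∈ Metric.ball (fun _ => x₀ : Fin (m + 1) → ℝ) (min δ₁ δ₃) := by
        intro τ hτ
        rw [Metric.mem_ball, dist_eq_norm]
        have he : (((fun _ => s) + τ • w) - (fun _ => x₀) : Fin (m + 1) → ℝ)
            = (((fun _ => s) - (fun _ => x₀)) : Fin (m + 1) → ℝ) + τ • w := by abel
        rw [he]
        calc ‖(((fun _ => s) - (fun _ => x₀)) : Fin (m + 1) → ℝ) + τ • w‖
            ≤ ‖(((fun _ => s) - (fun _ => x₀)) : Fin (m + 1) → ℝ)‖ + ‖τ • w‖ :=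
              norm_add_le _ _
          _ ≤ ‖y - (fun _ => x₀ : Fin (m + 1) → ℝ)‖ + |τ| * ‖w‖ := by
              rw [norm_smul, Real.norm_eq_abs]
              exact add_le_add hcs le_rfl
          _ ≤ ‖y - (fun _ => x₀ : Fin (m + 1) → ℝ)‖
              + 1 * (2 * ‖y - (fun _ => x₀ : Fin (m + 1) → ℝ)‖) := by
              have habs : |τ| ≤ 1 := abs_le.2 ⟨by linarith [hτ.1], hτ.2⟩
              have h0w : (0 : ℝ) ≤ ‖w‖ := norm_nonneg _
              nlinarith [abs_nonneg τ, norm_nonneg (y - (fun _ => x₀ : Fin (m + 1) → ℝ))]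
          _ = 3 * ‖y - (fun _ => x₀ : Fin (m + 1) → ℝ)‖ := by ring
          _ < 3 * r := by linarith
          _ ≤ min δ₁ δ₃ := h3r
      have hzt : ∀ τ ∈ Icc (0 : ℝ) 1, ((fun _ => s) + τ • w : Fin (m + 1) → ℝ) ∈ t :=
        fun τ hτ => hδ₃ (Metric.ball_subset_ball (min_le_right δ₁ δ₃) (hzball τ hτ))
      have hzH : ∀ τ ∈ Icc (0 : ℝ) 1, 0 ≤
          fderiv ℝ (fderiv ℝ D) ((fun _ => s) + τ • w : Fin (m + 1) → ℝ) w w := by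
        intro τ hτ
        set z : Fin (m + 1) → ℝ := (fun _ => s) + τ • w with hz
        have hdist : dist z (fun _ => x₀ : Fin (m + 1) → ℝ) < δ₁ :=
          lt_of_lt_of_le (Metric.mem_ball.mp (hzball τ hτ)) (min_le_left _ _)
        have hHd : ‖fderiv ℝ (fderiv ℝ D) z - fderiv ℝ (fderiv ℝ D) (fun _ => x₀ : Fin (m + 1) → ℝ)‖
            < κ / 2 := by
          exact (dist_eq_norm (fderiv ℝ (fderiv ℝ D) z)
            (fderiv ℝ (fderiv ℝ D) (fun _ => x₀ : Fin (m + 1) → ℝ))).symm.trans_lt (hδ₁ hdist)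
        set A := fderiv ℝ (fderiv ℝ D) z
          - fderiv ℝ (fderiv ℝ D) (fun _ => x₀ : Fin (m + 1) → ℝ) with hA
        have hbound : |A w w| ≤ κ / 2 * ‖w‖ ^ 2 := by
          calc |A w w| ≤ ‖A w‖ * ‖w‖ := by
                simpa [Real.norm_eq_abs] using (A w).le_opNorm w
            _ ≤ (‖A‖ * ‖w‖) * ‖w‖ := by
                have := A.le_opNorm w
                have h0w : (0 : ℝ) ≤ ‖w‖ := norm_nonneg _
                nlinarith
            _ ≤ κ / 2 * ‖w‖ ^ 2 := by
                have h0w : (0 : ℝ) ≤ ‖w‖ := norm_nonneg _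
                nlinarith
        have hlow := hκle w hwsum
        have hsplit : fderiv ℝ (fderiv ℝ D) z w w
            = fderiv ℝ (fderiv ℝ D) (fun _ => x₀ : Fin (m + 1) → ℝ) w w + A w w := by
          simp [hA, ContinuousLinearMap.sub_apply]
        rw [hsplit]
        have habs := abs_le.1 hbound
        have hsq : (0 : ℝ) ≤ ‖w‖ ^ 2 := sq_nonneg _
        nlinarith
      set g : ℝ → ℝ := fun τ => D ((fun _ => s) + τ • w) with hg
      set g₁ : ℝ → ℝ := fun τ => fderiv ℝ D ((fun _ => s) + τ • w) w with hg₁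
      have hinner : ∀ τ : ℝ,
          HasDerivAt (fun σ : ℝ => ((fun _ => s) + σ • w : Fin (m + 1) → ℝ)) w τ :=
        fun τ => by
          simpa using ((hasDerivAt_id τ).smul_const w).const_add (fun _ => s : Fin (m + 1) → ℝ)
      have hgd : ∀ τ ∈ Icc (0 : ℝ) 1, HasDerivAt g (g₁ τ) τ := by
        intro τ hτ
        have hF := (hDdiff _ (hzt τ hτ)).hasFDerivAt
        have h1 := hF.comp_hasDerivAt τ (hinner τ)
        simpa [hg, hg₁, Function.comp_def] using h1
      have hg1d : ∀ τ ∈ Icc (0 : ℝ) 1, HasDerivAt g₁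
          (fderiv ℝ (fderiv ℝ D) ((fun _ => s) + τ • w : Fin (m + 1) → ℝ) w w) τ := by
        intro τ hτ
        have hF := (hD'diff _ (hzt τ hτ)).hasFDerivAt
        have h1 := hF.comp_hasDerivAt τ (hinner τ)
        have h2 := (ContinuousLinearMap.apply ℝ ℝ w).hasFDerivAt.comp_hasDerivAt τ h1
        simpa [hg₁, Function.comp_def] using h2
      have hcs0 : ((fun _ => s) + (0 : ℝ) • w : Fin (m + 1) → ℝ) = fun _ => s := by
        simp
      have hg₁0 : g₁ 0 = 0 := by
        rw [hg₁]
        simp only [hcs0]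
        rw [hgrad s hsI]
        rfl
      have hg₁mono : MonotoneOn g₁ (Icc 0 1) := by
        apply monotoneOn_of_deriv_nonneg (convex_Icc 0 1)
        · exact fun τ hτ => ((hg1d τ hτ).continuousAt).continuousWithinAt
        · intro τ hτ
          rw [interior_Icc] at hτ
          exact ((hg1d τ (Ioo_subset_Icc_self hτ)).differentiableAt).differentiableWithinAt
        · intro τ hτ
          rw [interior_Icc] at hτ
          rw [(hg1d τ (Ioo_subset_Icc_self hτ)).deriv]
          exact hzH τ (Ioo_subset_Icc_self hτ)
      have hg₁nonneg : ∀ τ ∈ Icc (0 : ℝ) 1, 0 ≤ g₁ τ := by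
        intro τ hτ
        have := hg₁mono (left_mem_Icc.2 zero_le_one) hτ hτ.1
        rwa [hg₁0] at this
      have hgmono : MonotoneOn g (Icc 0 1) := by
        apply monotoneOn_of_deriv_nonneg (convex_Icc 0 1)
        · exact fun τ hτ => ((hgd τ hτ).continuousAt).continuousWithinAt
        · intro τ hτ
          rw [interior_Icc] at hτ
          exact ((hgd τ (Ioo_subset_Icc_self hτ)).differentiableAt).differentiableWithinAt
        · intro τ hτ
          rw [interior_Icc] at hτ
          rw [(hgd τ (Ioo_subset_Icc_self hτ)).deriv]
          exact hg₁nonneg τ (Ioo_subset_Icc_self hτ)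
      have hg0 : g 0 = 0 := by
        rw [hg]
        simp only [hcs0]
        exact hdiag s hsI
      have hg1 : g 1 = D y := by
        have h1 : ((fun _ => s) + (1 : ℝ) • w : Fin (m + 1) → ℝ) = y := by
          rw [hw]; simp
        rw [hg]
        simp only [h1]
      have hfinal := hgmono (left_mem_Icc.2 zero_le_one) (right_mem_Icc.2 zero_le_one)
        zero_le_one
      rw [hg0, hg1] at hfinal
      have hDy : 0 ≤ N y - M y := hfinal
      linarith
  choose r hr hrI hrle using hkey
  refine ⟨⋃ (x : ℝ) (hx : x ∈ I), Metric.ball (fun _ => x) (r x hx), ?_, ?_, ?_, ?_⟩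
  · exact isOpen_iUnion fun x => isOpen_iUnion fun hx => Metric.isOpen_ball
  · exact Set.iUnion₂_subset fun x hx => hrI x hx
  · intro x hx
    exact Set.mem_iUnion₂.2 ⟨x, hx, Metric.mem_ball_self (hr x hx)⟩
  · intro y hy
    obtain ⟨x, hx, hyx⟩ := Set.mem_iUnion₂.1 hy
    exact hrle x hx y hyx
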